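/- Let φ be a driftless Bernstein function, and write z = a(1 + it) with a > 0, t > 0. With φ̄⋆(z) := qz + |z|² ∫₀^∞ e^{iaty} e^{−ay} μ̄(y) dy, one has arg φ⋆(z) = arg φ̄⋆(z) and Im(φ̄⋆(z)) ≥ 0. In particular, arg(z/φ(z)) ≥ 0 for all z with Re(z) > 0, Im(z) > 0. -/

import Mathlib

open MeasureTheory Set Filter

private lemma sin_int_nonneg (c : ℝ) (hc : 0 < c) (g : ℝ → ℝ)
    (hganti : AntitoneOn g (Set.Ioi 0))
    (hint : IntegrableOn (fun y => Real.sin (c * y) * g y) (Set.Ioi 0)) :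
    0 ≤ ∫ y in Set.Ioi (0:ℝ), Real.sin (c * y) * g y := by
  set f : ℝ → ℝ := fun y => Real.sin (c * y) * g y with hf
  set h : ℝ := Real.pi / c with hh
  have hh0 : 0 < h := div_pos Real.pi_pos hc
  have hch : c * h = Real.pi := by rw [hh]; field_simp [hc.ne']
  have hfI : ∀ a b : ℝ, 0 ≤ a → a ≤ b → IntervalIntegrable f volume a b := by
    intro a b ha hab
    rw [intervalIntegrable_iff_integrableOn_Ioc_of_le hab]
    exact hint.mono_set (fun x hx => lt_of_le_of_lt ha hx.1)
  have hper : ∀ n : ℕ, 0 ≤ ∫ y in (n * (2*h))..(n * (2*h) + 2*h), f y := by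
    intro n
    set a : ℝ := n * (2*h) with hadef
    have ha0 : 0 ≤ a := by positivity
    have hca : c * a = n * (2 * Real.pi) := by
      rw [hadef, hh]; field_simp
    have I1 : IntervalIntegrable f volume a (a + h) := hfI a (a+h) ha0 (by linarith)
    have I2 : IntervalIntegrable f volume (a+h) (a + 2*h) := hfI _ _ (by linarith) (by linarith)
    have hganti2 : AntitoneOn (fun u => g (u + h)) (Set.Icc a (a+h)) := by
      intro x hx y hy hxy
      exact hganti (by simp; linarith [hx.1]) (by simp; linarith [hy.1]) (by linarith)
    have I3 : IntervalIntegrable (fun u => Real.sin (c*u) * g (u + h)) volume a (a+h) := by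
      rw [intervalIntegrable_iff_integrableOn_Ioc_of_le (by linarith)]
      have hg' : IntegrableOn (fun u => g (u + h)) (Set.Ioc a (a+h)) :=
        (AntitoneOn.integrableOn_isCompact isCompact_Icc hganti2).mono_set Ioc_subset_Icc_self
      exact hg'.bdd_mul (c := 1) (Real.continuous_sin.comp (continuous_const.mul continuous_id)).aestronglyMeasurable
        (ae_of_all _ fun u => by simpa using Real.abs_sin_le_one (c*u))
    have step1 : ∫ y in a..(a + 2*h), f y
        = (∫ y in a..(a+h), f y) + ∫ y in (a+h)..(a+2*h), f y :=
      (intervalIntegral.integral_add_adjacent_intervals I1 I2).symm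
    have step2 : (∫ y in (a+h)..(a+2*h), f y) = ∫ u in a..(a+h), f (u + h) := by
      rw [intervalIntegral.integral_comp_add_right f h]
      congr 1; ring
    have step3 : ∀ u, f (u + h) = -(Real.sin (c*u) * g (u+h)) := by
      intro u
      have : c * (u + h) = c * u + Real.pi := by rw [mul_add, hch]
      simp [hf, this, Real.sin_add_pi]
    have step4 : (∫ u in a..(a+h), f (u + h)) = - ∫ u in a..(a+h), Real.sin (c*u) * g (u+h) := by
      simp only [step3]; exact intervalIntegral.integral_neg
    have key : ∫ y in a..(a + 2*h), f y
        = ∫ u in a..(a+h), (f u - Real.sin (c*u) * g (u+h)) := by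
      rw [step1, step2, step4, ← sub_eq_add_neg, ← intervalIntegral.integral_sub I1 I3]
    rw [key, intervalIntegral.integral_of_le (by linarith : a ≤ a + h)]
    apply setIntegral_nonneg measurableSet_Ioc
    intro u hu
    have hu0 : 0 < u := lt_of_le_of_lt ha0 hu.1
    have hsin : 0 ≤ Real.sin (c * u) := by
      have e : Real.sin (c * u) = Real.sin (c * u - n * (2 * Real.pi)) := by
        rw [← Real.sin_add_int_mul_two_pi (c*u - n*(2*Real.pi)) n]; push_cast; ring_nf
      rw [e]
      apply Real.sin_nonneg_of_nonneg_of_le_pi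
      · rw [← hca]; nlinarith [hu.1]
      · have : c * u ≤ c * (a + h) := by nlinarith [hu.2]
        rw [mul_add, hca, hch] at this; linarith
    have hgu : g (u + h) ≤ g u := hganti (by simpa using hu0) (by simp; linarith) (by linarith)
    simp only [hf]
    nlinarith
  have hpart : ∀ N : ℕ, 0 ≤ ∫ y in (0:ℝ)..(N * (2*h)), f y := by
    intro N
    induction N with
    | zero => simp
    | succ n ih =>
        have hsplit : ∫ y in (0:ℝ)..((n+1 : ℕ) * (2*h)), f y
            = (∫ y in (0:ℝ)..(n * (2*h)), f y) + ∫ y in (n * (2*h))..(n * (2*h) + 2*h), f y := by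
          rw [intervalIntegral.integral_add_adjacent_intervals (hfI _ _ le_rfl (by positivity))
            (hfI _ _ (by positivity) (by linarith))]
          congr 1; push_cast; ring
        rw [hsplit]
        exact add_nonneg ih (hper n)
  have hlim : Tendsto (fun N : ℕ => ∫ y in (0:ℝ)..(N * (2*h)), f y) atTop
      (nhds (∫ y in Set.Ioi (0:ℝ), f y)) := by
    apply intervalIntegral_tendsto_integral_Ioi 0 hint
    exact Tendsto.atTop_mul_const (by positivity) tendsto_natCast_atTop_atTop
  exact ge_of_tendsto' hlim hpart

private lemma exp_I_mul_im (r s : ℝ) :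
    (Complex.exp (Complex.I * (r:ℂ)) * (s:ℂ)).im = Real.sin r * s := by
  rw [mul_comm Complex.I, Complex.exp_mul_I]
  simp [add_mul, Complex.sin_ofReal_re, mul_comm]

theorem arg_phistar_nonneg
    (q : ℝ) (hq : 0 ≤ q)
    (mubar : ℝ → ℝ)
    (hnn : ∀ y : ℝ, 0 < y → 0 ≤ mubar y)
    (hmono : AntitoneOn mubar (Set.Ioi 0))
    (φ : ℂ → ℂ)
    (hφ : ∀ z : ℂ, 0 < z.re →
      φ z = (q : ℂ) + z * ∫ y in Set.Ioi (0:ℝ),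
        Complex.exp (-(z * (y : ℂ))) * (mubar y : ℂ))
    (hint : ∀ z : ℂ, 0 < z.re →
      IntegrableOn (fun y : ℝ => Complex.exp (-(z * (y : ℂ))) * (mubar y : ℂ))
        (Set.Ioi 0))
    (F : ℝ → ℝ → ℂ)
    (hF : ∀ a t : ℝ, F a t
      = (q : ℂ) * ((a : ℂ) * (1 + (t : ℂ) * Complex.I))
        + (‖(a : ℂ) * (1 + (t : ℂ) * Complex.I)‖ ^ 2 : ℝ)
          * ∫ y in Set.Ioi (0:ℝ),
              Complex.exp (Complex.I * ((a * t * y : ℝ) : ℂ))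
                * ((Real.exp (-(a * y)) * mubar y : ℝ) : ℂ)) :
    (∀ a t : ℝ, 0 < a → 0 < t →
      Complex.arg (((a : ℂ) * (1 + (t : ℂ) * Complex.I))
          / φ ((a : ℂ) * (1 + (t : ℂ) * Complex.I)))
        = Complex.arg (F a t)
      ∧ 0 ≤ (F a t).im)
    ∧ (∀ z : ℂ, 0 < z.re → 0 < z.im → 0 ≤ Complex.arg (z / φ z)) := by
  have main : ∀ a t : ℝ, 0 < a → 0 < t →
      Complex.arg (((a : ℂ) * (1 + (t : ℂ) * Complex.I))
          / φ ((a : ℂ) * (1 + (t : ℂ) * Complex.I)))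
        = Complex.arg (F a t)
      ∧ 0 ≤ (F a t).im := by
    intro a t ha ht
    set z : ℂ := (a : ℂ) * (1 + (t : ℂ) * Complex.I) with hz
    have hzre : z.re = a := by simp [hz]
    have hzim : z.im = a * t := by simp [hz]
    have hz0 : 0 < z.re := by rw [hzre]; exact ha
    -- conjugation identity for the integrands
    have hconj : ∀ y : ℝ,
        Complex.exp (Complex.I * ((a * t * y : ℝ) : ℂ)) * ((Real.exp (-(a * y)) * mubar y : ℝ) : ℂ)
        = (starRingEnd ℂ) (Complex.exp (-(z * (y : ℂ))) * (mubar y : ℂ)) := by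
      intro y
      rw [map_mul, ← Complex.exp_conj, Complex.conj_ofReal]
      rw [(show (starRingEnd ℂ) (-(z * (y:ℂ))) = ((-(a*y) : ℝ) : ℂ) + Complex.I * ((a*t*y : ℝ) : ℂ) from by
        apply Complex.ext <;> simp [hz] <;> ring)]
      rw [Complex.exp_add]
      push_cast
      ring
    have hintF : IntegrableOn (fun y : ℝ =>
        Complex.exp (Complex.I * ((a * t * y : ℝ) : ℂ)) * ((Real.exp (-(a * y)) * mubar y : ℝ) : ℂ))
        (Set.Ioi 0) := by
      have hc : IntegrableOn (fun y : ℝ => (starRingEnd ℂ)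
          (Complex.exp (-(z * (y : ℂ))) * (mubar y : ℂ))) (Set.Ioi 0) :=
        ⟨Complex.continuous_conj.comp_aestronglyMeasurable (hint z hz0).1, by
          simpa [hasFiniteIntegral_iff_norm] using (hint z hz0).2⟩
      exact hc.congr_fun (fun y _ => (hconj y).symm) measurableSet_Ioi
    have hI : (∫ y in Set.Ioi (0:ℝ),
        Complex.exp (Complex.I * ((a * t * y : ℝ) : ℂ)) * ((Real.exp (-(a * y)) * mubar y : ℝ) : ℂ))
        = (starRingEnd ℂ) (∫ y in Set.Ioi (0:ℝ), Complex.exp (-(z * (y : ℂ))) * (mubar y : ℂ)) := by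
      rw [← integral_conj]
      exact setIntegral_congr_fun measurableSet_Ioi (fun y _ => hconj y)
    have hFz : F a t = z * (starRingEnd ℂ) (φ z) := by
      have habs : ((‖z‖ ^ 2 : ℝ) : ℂ) = z * (starRingEnd ℂ) z := by
        rw [Complex.mul_conj, Complex.sq_norm]
      have hcphi : (starRingEnd ℂ) (φ z) = (q : ℂ)
          + (starRingEnd ℂ) z * (starRingEnd ℂ)
              (∫ y in Set.Ioi (0:ℝ), Complex.exp (-(z * (y : ℂ))) * (mubar y : ℂ)) := by
        rw [hφ z hz0, map_add, map_mul, Complex.conj_ofReal]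
      rw [hF, ← hz, hI, hcphi, habs]
      ring
    constructor
    · -- arg equality
      by_cases hφ0 : φ z = 0
      · rw [hφ0, div_zero, hFz, hφ0, map_zero, mul_zero]
      · have key : z / φ z = ((Complex.normSq (φ z))⁻¹ : ℝ) * F a t := by
          rw [hFz, div_eq_mul_inv, Complex.inv_def]
          push_cast
          ring
        rw [key, Complex.arg_real_mul _ (inv_pos.mpr (Complex.normSq_pos.mpr hφ0))]
    · -- Im nonneg
      set w : ℂ := ∫ y in Set.Ioi (0:ℝ),
          Complex.exp (Complex.I * ((a * t * y : ℝ) : ℂ)) * ((Real.exp (-(a * y)) * mubar y : ℝ) : ℂ)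
        with hw
      have him : w.im = ∫ y in Set.Ioi (0:ℝ),
          Real.sin (a * t * y) * (Real.exp (-(a * y)) * mubar y) := by
        have h1 := integral_im hintF
        simp only [RCLike.im_eq_complex_im] at h1
        rw [hw, ← h1]
        refine setIntegral_congr_fun measurableSet_Ioi (fun y _ => ?_)
        rw [exp_I_mul_im]
      have hg : AntitoneOn (fun y => Real.exp (-(a * y)) * mubar y) (Set.Ioi 0) := by
        intro x hx y hy hxy
        have h1 : Real.exp (-(a * y)) ≤ Real.exp (-(a * x)) := by
          apply Real.exp_le_exp.mpr; simp at hx hy ⊢; nlinarith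
        have h2 : mubar y ≤ mubar x := hmono hx hy hxy
        have h3 : 0 ≤ mubar y := hnn y (by simpa using hy)
        have h4 : 0 ≤ Real.exp (-(a*x)) := Real.exp_nonneg _
        dsimp only
        nlinarith
      have hgi : IntegrableOn (fun y => Real.sin (a * t * y) * (Real.exp (-(a * y)) * mubar y))
          (Set.Ioi 0) := by
        have h5 : IntegrableOn (fun y : ℝ => (Complex.exp (Complex.I * ((a * t * y : ℝ) : ℂ))
            * ((Real.exp (-(a * y)) * mubar y : ℝ) : ℂ)).im) (Set.Ioi 0) := hintF.im
        refine h5.congr_fun (fun y _ => ?_) measurableSet_Ioi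
        exact exp_I_mul_im _ _
      have hsin : 0 ≤ ∫ y in Set.Ioi (0:ℝ), Real.sin (a * t * y) * (Real.exp (-(a * y)) * mubar y) := by
        have := sin_int_nonneg (a * t) (mul_pos ha ht) (fun y => Real.exp (-(a * y)) * mubar y) hg
          (by simpa [mul_assoc] using hgi)
        simpa [mul_assoc] using this
      have key : ((q : ℂ) * z + ((‖z‖ ^ 2 : ℝ) : ℂ) * w).im
          = q * z.im + ‖z‖ ^ 2 * w.im := by
        simp [Complex.add_im, Complex.mul_im, ← Complex.ofReal_pow]
      rw [hF, ← hz, ← hw, key, hzim, him]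
      exact add_nonneg (mul_nonneg hq (by positivity))
        (mul_nonneg (by positivity) hsin)
  refine ⟨main, ?_⟩
  intro z hre him
  set a : ℝ := z.re with hadef
  set t : ℝ := z.im / z.re with htdef
  have ht : 0 < t := div_pos him hre
  have hzz : (a : ℂ) * (1 + (t : ℂ) * Complex.I) = z := by
    apply Complex.ext <;> simp [hadef, htdef]
    field_simp
    exact div_self (show z.re ≠ 0 from hre.ne')
  obtain ⟨h1, h2⟩ := main a t hre ht
  rw [hzz] at h1
  rw [h1]
  exact Complex.arg_nonneg_iff.mpr h2
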